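/- arXiv:2309.04101 — 3 statements merged into one kernel-verified Lean document; each statement's English description precedes it below -/
import Mathlib

section
/- For every n ≥ 5, the largest eigenvalue of the signed graph Γ2 of order n is strictly smaller than that of the signed graph Γ1 of order n: λ1(Γ2) < λ1(Γ1). -/
open scoped BigOperators

/-- A signed graph on the vertex set `Fin n`: a simple graph together with a
symmetric `±1` sign on each edge. -/
structure SignedGraph (n : ℕ) where
  G : SimpleGraph (Fin n)
  sign : Fin n → Fin n → ℤ
  sign_symm : ∀ i j, sign i j = sign j i
  sign_pm : ∀ i j, G.Adj i j → sign i j = 1 ∨ sign i j = -1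

namespace SignedGraph

variable {n : ℕ}

open Classical in
/-- The adjacency matrix of a signed graph, as a real matrix. -/
noncomputable def adjMatrix (Γ : SignedGraph n) : Matrix (Fin n) (Fin n) ℝ :=
  fun i j => if Γ.G.Adj i j then (Γ.sign i j : ℝ) else 0

/-- The largest eigenvalue (the index) of a signed graph. -/
noncomputable def lambda1 (Γ : SignedGraph n) : ℝ :=
  sSup (spectrum ℝ Γ.adjMatrix)

/-- The sign of an unordered edge. -/
def signEdge (Γ : SignedGraph n) : Sym2 (Fin n) → ℤ :=
  Sym2.lift ⟨Γ.sign, Γ.sign_symm⟩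

/-- The sign of a walk: the product of the signs of its edges. -/
def walkSign (Γ : SignedGraph n) {u v : Fin n} (w : Γ.G.Walk u v) : ℤ :=
  (w.edges.map Γ.signEdge).prod

/-- A negative cycle: a cycle whose sign is `-1`
(equivalently, with an odd number of negative edges). -/
def IsNegCycle (Γ : SignedGraph n) {u : Fin n} (c : Γ.G.Walk u u) : Prop :=
  c.IsCycle ∧ Γ.walkSign c = -1

/-- A signed graph is unbalanced if it contains a negative cycle. -/
def Unbalanced (Γ : SignedGraph n) : Prop :=
  ∃ (u : Fin n) (c : Γ.G.Walk u u), Γ.IsNegCycle c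

/-- A signed graph is negative-`C₄`-free if it contains no negative 4-cycle. -/
def NegC4Free (Γ : SignedGraph n) : Prop :=
  ∀ (u : Fin n) (c : Γ.G.Walk u u), c.IsCycle → c.length = 4 → Γ.walkSign c ≠ -1

end SignedGraph

/-- The signed graph `Γ₁`: vertices `2,…,n-1` induce an all-positive complete
graph, vertices `0` and `1` are joined to each other by a negative edge and to
vertex `2` by positive edges, and have no other neighbours. -/
def Gamma1 (n : ℕ) : SignedGraph n where
  G :=
    { Adj := fun i j => i ≠ j ∧ (2 ≤ min i.val j.val ∨ max i.val j.val ≤ 2)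
      symm := by
        constructor
        intro i j h
        refine ⟨Ne.symm h.1, ?_⟩
        rw [min_comm, max_comm]
        exact h.2
      loopless := by constructor; intro i h; exact h.1 rfl }
  sign := fun i j =>
    if (i.val = 0 ∧ j.val = 1) ∨ (i.val = 1 ∧ j.val = 0) then -1 else 1
  sign_symm := by
    intro i j
    try dsimp only
    by_cases h : (i.val = 0 ∧ j.val = 1) ∨ (i.val = 1 ∧ j.val = 0)
    · rw [if_pos h, if_pos (by tauto)]
    · rw [if_neg h, if_neg (by tauto)]
  sign_pm := by
    intro i j _
    try dsimp only
    by_cases h : (i.val = 0 ∧ j.val = 1) ∨ (i.val = 1 ∧ j.val = 0)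
    · rw [if_pos h]; right; rfl
    · rw [if_neg h]; left; rfl

/-- The signed graph `Γ₂`: vertices `4,…,n-1` induce an all-positive complete
graph, vertices `2` and `3` are joined by positive edges to all of `4,…,n-1`
(but not to each other), vertices `0` and `1` are joined to each other by a
negative edge and to `2` and `3` by positive edges, and have no other
neighbours. -/
def Gamma2 (n : ℕ) : SignedGraph n where
  G :=
    { Adj := fun i j => i ≠ j ∧
        ((i.val ≤ 1 ∧ j.val ≤ 3) ∨ (j.val ≤ 1 ∧ i.val ≤ 3) ∨
         (2 ≤ i.val ∧ i.val ≤ 3 ∧ 4 ≤ j.val) ∨ (2 ≤ j.val ∧ j.val ≤ 3 ∧ 4 ≤ i.val) ∨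
         (4 ≤ i.val ∧ 4 ≤ j.val))
      symm := by
        constructor
        intro i j h
        exact ⟨Ne.symm h.1, by tauto⟩
      loopless := by constructor; intro i h; exact h.1 rfl }
  sign := fun i j =>
    if (i.val = 0 ∧ j.val = 1) ∨ (i.val = 1 ∧ j.val = 0) then -1 else 1
  sign_symm := by
    intro i j
    try dsimp only
    by_cases h : (i.val = 0 ∧ j.val = 1) ∨ (i.val = 1 ∧ j.val = 0)
    · rw [if_pos h, if_pos (by tauto)]
    · rw [if_neg h, if_neg (by tauto)]
  sign_pm := by
    intro i j _
    try dsimp only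
    by_cases h : (i.val = 0 ∧ j.val = 1) ∨ (i.val = 1 ∧ j.val = 0)
    · rw [if_pos h]; right; rfl
    · rw [if_neg h]; left; rfl


/-- The all-negative complete signed graph `(K_n, -)`. -/
def NegKn (n : ℕ) : SignedGraph n where
  G := ⊤
  sign := fun _ _ => -1
  sign_symm := fun _ _ => rfl
  sign_pm := fun _ _ _ => Or.inr rfl

/-- `Γ` is switching equivalent to `Γ'` (up to a relabelling of the vertices):
there is a bijection of the vertices matching the underlying graphs and a
`±1`-valued switching function `s` relating the two sign functions. -/
def SwitchingEquiv {n : ℕ} (Γ Γ' : SignedGraph n) : Prop :=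
  ∃ e : Fin n ≃ Fin n, ∃ s : Fin n → ℤ, (∀ i, s i = 1 ∨ s i = -1) ∧
    (∀ i j, Γ.G.Adj i j ↔ Γ'.G.Adj (e i) (e j)) ∧
    (∀ i j, Γ.G.Adj i j → Γ.sign i j = s i * Γ'.sign (e i) (e j) * s j)


open Matrix

lemma myexists_eig {n : ℕ} (A : Matrix (Fin n) (Fin n) ℝ) {l : ℝ}
    (h : l ∈ spectrum ℝ A) : ∃ x : Fin n → ℝ, x ≠ 0 ∧ A *ᵥ x = l • x := by
  rw [spectrum.mem_iff, Matrix.isUnit_iff_isUnit_det, isUnit_iff_ne_zero, not_not] at h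
  obtain ⟨v, hv, hv0⟩ := (Matrix.exists_mulVec_eq_zero_iff).2 h
  refine ⟨v, hv, ?_⟩
  rw [Matrix.sub_mulVec] at hv0
  have h2 : (algebraMap ℝ (Matrix (Fin n) (Fin n) ℝ) l) *ᵥ v = l • v := by
    rw [Algebra.algebraMap_eq_smul_one, Matrix.smul_mulVec, Matrix.one_mulVec]
  rw [h2] at hv0
  exact (sub_eq_zero.mp hv0).symm

lemma myrayleigh {n : ℕ} {A : Matrix (Fin n) (Fin n) ℝ} (hA : A.IsHermitian)
    (x : Fin n → ℝ) : x ⬝ᵥ (A *ᵥ x) ≤ sSup (spectrum ℝ A) * (x ⬝ᵥ x) := by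
  set μ := sSup (spectrum ℝ A) with hμ
  have hbdd : BddAbove (spectrum ℝ A) := (Matrix.finite_real_spectrum).bddAbove
  have hle : ∀ i, hA.eigenvalues i ≤ μ := fun i =>
    le_csSup hbdd (hA.eigenvalues_mem_spectrum_real i)
  set U : Matrix (Fin n) (Fin n) ℝ := (hA.eigenvectorUnitary : Matrix (Fin n) (Fin n) ℝ) with hUdef
  have hsm : μ • (1 : Matrix (Fin n) (Fin n) ℝ) = U * (μ • 1) * (star U) := by
    rw [Matrix.mul_smul, mul_one, Matrix.smul_mul,
      (Matrix.mem_unitaryGroup_iff).mp hA.eigenvectorUnitary.2]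
  have hdiag : μ • (1 : Matrix (Fin n) (Fin n) ℝ) -
      Matrix.diagonal (RCLike.ofReal ∘ hA.eigenvalues) =
      Matrix.diagonal (fun i => μ - hA.eigenvalues i) := by
    ext i j
    by_cases h : i = j <;>
      simp [Matrix.one_apply, Matrix.diagonal_apply, h]
  have key : μ • (1 : Matrix (Fin n) (Fin n) ℝ) - A =
      U * (Matrix.diagonal (fun i => μ - hA.eigenvalues i)) * (star U) := by
    calc μ • (1 : Matrix (Fin n) (Fin n) ℝ) - A
        = U * (μ • 1) * (star U) -
          U * Matrix.diagonal (RCLike.ofReal ∘ hA.eigenvalues) * (star U) := by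
          rw [← hsm]; exact congrArg _ hA.spectral_theorem
      _ = U * (μ • (1 : Matrix (Fin n) (Fin n) ℝ) -
            Matrix.diagonal (RCLike.ofReal ∘ hA.eigenvalues)) * (star U) := by
          rw [Matrix.mul_sub, Matrix.sub_mul]
      _ = _ := by rw [hdiag]
  have hpsd : (μ • (1 : Matrix (Fin n) (Fin n) ℝ) - A).PosSemidef := by
    rw [key, Matrix.star_eq_conjTranspose]
    exact (Matrix.posSemidef_diagonal_iff.2 fun i => sub_nonneg.2 (hle i)).mul_mul_conjTranspose_same U
  have h0 := hpsd.re_dotProduct_nonneg x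
  simp only [RCLike.re_to_real, star_trivial] at h0
  rw [Matrix.sub_mulVec, Matrix.smul_mulVec, Matrix.one_mulVec,
    dotProduct_sub, dotProduct_smul] at h0
  have : x ⬝ᵥ x * μ = μ * (x ⬝ᵥ x) := mul_comm _ _
  simp only [smul_eq_mul] at h0
  linarith [h0]
section Aux
open Matrix Finset

variable {n : ℕ}

lemma adj_isHermitian (Γ : SignedGraph n) : Γ.adjMatrix.IsHermitian := by
  ext i j
  simp only [Matrix.conjTranspose_apply, SignedGraph.adjMatrix, star_trivial]
  by_cases h : Γ.G.Adj i j
  · rw [if_pos h, if_pos (Γ.G.adj_symm h), Γ.sign_symm]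
  · rw [if_neg h, if_neg (fun h' => h (Γ.G.adj_symm h'))]

lemma filter_le3 (hn : 5 ≤ n) :
    Finset.univ.filter (fun j : Fin n => j.val ≤ 3) =
      {(⟨0, by omega⟩ : Fin n), ⟨1, by omega⟩, ⟨2, by omega⟩, ⟨3, by omega⟩} := by
  ext j
  simp [Fin.ext_iff]
  omega

lemma sum_split4 (hn : 5 ≤ n) (g : Fin n → ℝ) :
    ∑ j, g j = g ⟨0, by omega⟩ + g ⟨1, by omega⟩ + g ⟨2, by omega⟩ + g ⟨3, by omega⟩ +
      ∑ j ∈ Finset.univ.filter (fun j : Fin n => ¬ j.val ≤ 3), g j := by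
  rw [← Finset.sum_filter_add_sum_filter_not Finset.univ (fun j : Fin n => j.val ≤ 3) g,
    filter_le3 hn]
  congr 1
  rw [Finset.sum_insert (by simp [Fin.ext_iff]), Finset.sum_insert (by simp [Fin.ext_iff]),
    Finset.sum_insert (by simp [Fin.ext_iff]), Finset.sum_singleton]
  ring

lemma card_F4 (hn : 5 ≤ n) :
    (Finset.univ.filter (fun j : Fin n => ¬ j.val ≤ 3)).card = n - 4 := by
  have h := Finset.card_filter_add_card_filter_not
    (s := (Finset.univ : Finset (Fin n))) (p := fun j : Fin n => j.val ≤ 3)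
  rw [filter_le3 hn] at h
  have h4 : ({(⟨0, by omega⟩ : Fin n), ⟨1, by omega⟩, ⟨2, by omega⟩, ⟨3, by omega⟩} :
      Finset (Fin n)).card = 4 := by
    rw [Finset.card_insert_of_notMem (by simp [Fin.ext_iff]),
      Finset.card_insert_of_notMem (by simp [Fin.ext_iff]),
      Finset.card_insert_of_notMem (by simp [Fin.ext_iff]), Finset.card_singleton]
  simp only [Finset.card_univ, Fintype.card_fin] at h
  omega

end Aux
section Rows
open Matrix Finset

variable {n : ℕ}

-- abbreviations
lemma g2_entry_lo (hn : 5 ≤ n) (i j : Fin n) (hij : i ≠ j) (hi : i.val ≤ 3) (hj : j.val ≤ 3)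
    (hnot : ¬ (i.val ≥ 2 ∧ j.val ≥ 2)) :
    (Gamma2 n).adjMatrix i j = (if (i.val = 0 ∧ j.val = 1) ∨ (i.val = 1 ∧ j.val = 0) then (-1:ℝ) else 1) := by
  have hadj : (Gamma2 n).G.Adj i j := by
    refine ⟨hij, ?_⟩
    omega
  rw [SignedGraph.adjMatrix, if_pos hadj]
  have hs : (Gamma2 n).sign i j = if (i.val = 0 ∧ j.val = 1) ∨ (i.val = 1 ∧ j.val = 0) then (-1:ℤ) else 1 := rfl
  rw [hs]
  split_ifs <;> norm_num

example (hn : 5 ≤ n) : (Gamma2 n).adjMatrix ⟨0, by omega⟩ ⟨2, by omega⟩ = 1 := by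
  rw [g2_entry_lo hn _ _ (by simp [Fin.ext_iff]) (by norm_num) (by norm_num) (by norm_num)]
  norm_num

example (hn : 5 ≤ n) : (Gamma2 n).adjMatrix ⟨0, by omega⟩ ⟨1, by omega⟩ = -1 := by
  rw [g2_entry_lo hn _ _ (by simp [Fin.ext_iff]) (by norm_num) (by norm_num) (by norm_num)]
  norm_num

example (hn : 5 ≤ n) (j : Fin n) (hj : ¬ j.val ≤ 3) : (Gamma2 n).adjMatrix ⟨0, by omega⟩ j = 0 := by
  rw [SignedGraph.adjMatrix, if_neg]
  rintro ⟨hne, h⟩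
  simp only at h
  omega

example (hn : 5 ≤ n) : (Gamma2 n).adjMatrix ⟨2, by omega⟩ ⟨3, by omega⟩ = 0 := by
  rw [SignedGraph.adjMatrix, if_neg]
  rintro ⟨hne, h⟩
  simp only at h
  omega

example (hn : 5 ≤ n) (i j : Fin n) (hi : 2 ≤ i.val) (hi3 : i.val ≤ 3) (hj : 4 ≤ j.val) :
    (Gamma2 n).adjMatrix i j = 1 := by
  have hadj : (Gamma2 n).G.Adj i j := ⟨by simp [Fin.ext_iff]; omega, by omega⟩
  rw [SignedGraph.adjMatrix, if_pos hadj]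
  have hs : (Gamma2 n).sign i j = if (i.val = 0 ∧ j.val = 1) ∨ (i.val = 1 ∧ j.val = 0) then (-1:ℤ) else 1 := rfl
  rw [hs, if_neg (by omega)]; norm_num
end Rows
section Rows2
open Matrix Finset

variable {n : ℕ}

lemma adj_diag (Γ : SignedGraph n) (i : Fin n) : Γ.adjMatrix i i = 0 := by
  rw [SignedGraph.adjMatrix, if_neg (fun h => Γ.G.loopless.irrefl i h)]

-- Γ2 entries
lemma g2_lo_hi (hn : 5 ≤ n) (i j : Fin n) (hi : i.val ≤ 1) (hj : ¬ j.val ≤ 3) :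
    (Gamma2 n).adjMatrix i j = 0 := by
  rw [SignedGraph.adjMatrix, if_neg]
  rintro ⟨hne, h⟩
  omega

lemma g2_hi_lo (hn : 5 ≤ n) (i j : Fin n) (hi : ¬ i.val ≤ 3) (hj : j.val ≤ 1) :
    (Gamma2 n).adjMatrix i j = 0 := by
  rw [SignedGraph.adjMatrix, if_neg]
  rintro ⟨hne, h⟩
  omega

lemma g2_mid (hn : 5 ≤ n) (i j : Fin n)
    (h : (2 ≤ i.val ∧ i.val ≤ 3 ∧ 4 ≤ j.val) ∨ (2 ≤ j.val ∧ j.val ≤ 3 ∧ 4 ≤ i.val)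
        ∨ (4 ≤ i.val ∧ 4 ≤ j.val ∧ i ≠ j)
        ∨ (i.val ≤ 1 ∧ 2 ≤ j.val ∧ j.val ≤ 3) ∨ (j.val ≤ 1 ∧ 2 ≤ i.val ∧ i.val ≤ 3)) :
    (Gamma2 n).adjMatrix i j = 1 := by
  have hne : i ≠ j := by
    rcases h with h|h|h|h|h
    · intro he; rw [he] at h; omega
    · intro he; rw [he] at h; omega
    · exact h.2.2
    · intro he; rw [he] at h; omega
    · intro he; rw [he] at h; omega
  have hadj : (Gamma2 n).G.Adj i j := by
    refine ⟨hne, ?_⟩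
    show _ ∨ _ ∨ _ ∨ _ ∨ _
    omega
  rw [SignedGraph.adjMatrix, if_pos hadj]
  have hs : (Gamma2 n).sign i j =
      if (i.val = 0 ∧ j.val = 1) ∨ (i.val = 1 ∧ j.val = 0) then (-1:ℤ) else 1 := rfl
  rw [hs, if_neg (by omega)]
  norm_num

lemma g2_neg (hn : 5 ≤ n) (i j : Fin n)
    (h : (i.val = 0 ∧ j.val = 1) ∨ (i.val = 1 ∧ j.val = 0)) :
    (Gamma2 n).adjMatrix i j = -1 := by
  have hadj : (Gamma2 n).G.Adj i j := by
    refine ⟨by intro he; rw [he] at h; omega, ?_⟩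
    show _ ∨ _ ∨ _ ∨ _ ∨ _
    omega
  rw [SignedGraph.adjMatrix, if_pos hadj]
  have hs : (Gamma2 n).sign i j =
      if (i.val = 0 ∧ j.val = 1) ∨ (i.val = 1 ∧ j.val = 0) then (-1:ℤ) else 1 := rfl
  rw [hs, if_pos (by omega)]
  norm_num

-- Γ2 rows
lemma g2_row0 (hn : 5 ≤ n) (x : Fin n → ℝ) :
    ((Gamma2 n).adjMatrix *ᵥ x) ⟨0, by omega⟩ =
      -x ⟨1, by omega⟩ + x ⟨2, by omega⟩ + x ⟨3, by omega⟩ := by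
  simp only [Matrix.mulVec, dotProduct]
  rw [sum_split4 hn]
  rw [adj_diag, g2_neg hn _ _ (by norm_num), g2_mid hn _ _ (by norm_num),
    g2_mid hn _ _ (by norm_num),
    Finset.sum_eq_zero (fun j hj => by
      rw [g2_lo_hi hn _ _ (by norm_num) (by simpa using (Finset.mem_filter.mp hj).2), zero_mul])]
  ring

lemma g2_row1 (hn : 5 ≤ n) (x : Fin n → ℝ) :
    ((Gamma2 n).adjMatrix *ᵥ x) ⟨1, by omega⟩ =
      -x ⟨0, by omega⟩ + x ⟨2, by omega⟩ + x ⟨3, by omega⟩ := by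
  simp only [Matrix.mulVec, dotProduct]
  rw [sum_split4 hn]
  rw [adj_diag, g2_neg hn _ _ (by norm_num), g2_mid hn _ _ (by norm_num),
    g2_mid hn _ _ (by norm_num),
    Finset.sum_eq_zero (fun j hj => by
      rw [g2_lo_hi hn _ _ (by norm_num) (by simpa using (Finset.mem_filter.mp hj).2), zero_mul])]
  ring

lemma g2_row2 (hn : 5 ≤ n) (x : Fin n → ℝ) :
    ((Gamma2 n).adjMatrix *ᵥ x) ⟨2, by omega⟩ =
      x ⟨0, by omega⟩ + x ⟨1, by omega⟩ +
        ∑ j ∈ Finset.univ.filter (fun j : Fin n => ¬ j.val ≤ 3), x j := by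
  simp only [Matrix.mulVec, dotProduct]
  rw [sum_split4 hn]
  have h23 : (Gamma2 n).adjMatrix ⟨2, by omega⟩ ⟨3, by omega⟩ = 0 := by
    rw [SignedGraph.adjMatrix, if_neg]
    rintro ⟨hne, h⟩
    simp only at h
    omega
  rw [adj_diag, h23, g2_mid hn _ _ (by norm_num), g2_mid hn _ _ (by norm_num),
    Finset.sum_congr rfl (fun j hj => by
      rw [g2_mid hn _ _ (Or.inl ⟨by norm_num, by norm_num,
        by have := (Finset.mem_filter.mp hj).2; omega⟩), one_mul])]
  ring

lemma g2_row3 (hn : 5 ≤ n) (x : Fin n → ℝ) :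
    ((Gamma2 n).adjMatrix *ᵥ x) ⟨3, by omega⟩ =
      x ⟨0, by omega⟩ + x ⟨1, by omega⟩ +
        ∑ j ∈ Finset.univ.filter (fun j : Fin n => ¬ j.val ≤ 3), x j := by
  simp only [Matrix.mulVec, dotProduct]
  rw [sum_split4 hn]
  have h32 : (Gamma2 n).adjMatrix ⟨3, by omega⟩ ⟨2, by omega⟩ = 0 := by
    rw [SignedGraph.adjMatrix, if_neg]
    rintro ⟨hne, h⟩
    simp only at h
    omega
  rw [adj_diag, h32, g2_mid hn _ _ (by norm_num), g2_mid hn _ _ (by norm_num),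
    Finset.sum_congr rfl (fun j hj => by
      rw [g2_mid hn _ _ (Or.inl ⟨by norm_num, by norm_num,
        by have := (Finset.mem_filter.mp hj).2; omega⟩), one_mul])]
  ring

lemma g2_row4 (hn : 5 ≤ n) (x : Fin n → ℝ) (i : Fin n) (hi : ¬ i.val ≤ 3) :
    ((Gamma2 n).adjMatrix *ᵥ x) i =
      x ⟨2, by omega⟩ + x ⟨3, by omega⟩ +
        ((∑ j ∈ Finset.univ.filter (fun j : Fin n => ¬ j.val ≤ 3), x j) - x i) := by
  simp only [Matrix.mulVec, dotProduct]
  rw [sum_split4 hn]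
  have hf : ∀ j ∈ Finset.univ.filter (fun j : Fin n => ¬ j.val ≤ 3),
      (Gamma2 n).adjMatrix i j * x j = x j - (if j = i then x j else 0) := by
    intro j hj
    have hj4 : ¬ j.val ≤ 3 := by simpa using (Finset.mem_filter.mp hj).2
    by_cases hji : j = i
    · subst hji
      rw [adj_diag, zero_mul, if_pos rfl]
      ring
    · rw [g2_mid hn _ _ (Or.inr (Or.inr (Or.inl ⟨by omega, by omega,
        fun he => hji he.symm⟩))), one_mul, if_neg hji]
      ring
  have htail : ∑ j ∈ Finset.univ.filter (fun j : Fin n => ¬ j.val ≤ 3),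
      (Gamma2 n).adjMatrix i j * x j =
      (∑ j ∈ Finset.univ.filter (fun j : Fin n => ¬ j.val ≤ 3), x j) - x i := by
    rw [Finset.sum_congr rfl hf, Finset.sum_sub_distrib,
      Finset.sum_ite_eq' _ i x, if_pos (by simpa using hi)]
  rw [htail, g2_hi_lo hn _ _ hi (by norm_num), g2_hi_lo hn _ _ hi (by norm_num),
    g2_mid hn _ _ (Or.inr (Or.inl ⟨by norm_num, by norm_num, by omega⟩)),
    g2_mid hn _ _ (Or.inr (Or.inl ⟨by norm_num, by norm_num, by omega⟩))]
  ring

end Rows2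
section Rows1
open Matrix Finset

variable {n : ℕ}

lemma filter_le2 (hn : 5 ≤ n) :
    Finset.univ.filter (fun j : Fin n => j.val ≤ 2) =
      {(⟨0, by omega⟩ : Fin n), ⟨1, by omega⟩, ⟨2, by omega⟩} := by
  ext j
  simp [Fin.ext_iff]
  omega

lemma sum_split3 (hn : 5 ≤ n) (g : Fin n → ℝ) :
    ∑ j, g j = g ⟨0, by omega⟩ + g ⟨1, by omega⟩ + g ⟨2, by omega⟩ +
      ∑ j ∈ Finset.univ.filter (fun j : Fin n => ¬ j.val ≤ 2), g j := by
  rw [← Finset.sum_filter_add_sum_filter_not Finset.univ (fun j : Fin n => j.val ≤ 2) g,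
    filter_le2 hn]
  congr 1
  rw [Finset.sum_insert (by simp [Fin.ext_iff]), Finset.sum_insert (by simp [Fin.ext_iff]),
    Finset.sum_singleton]
  ring

lemma card_F3 (hn : 5 ≤ n) :
    (Finset.univ.filter (fun j : Fin n => ¬ j.val ≤ 2)).card = n - 3 := by
  have h := Finset.card_filter_add_card_filter_not
    (s := (Finset.univ : Finset (Fin n))) (p := fun j : Fin n => j.val ≤ 2)
  rw [filter_le2 hn] at h
  have h3 : ({(⟨0, by omega⟩ : Fin n), ⟨1, by omega⟩, ⟨2, by omega⟩} :
      Finset (Fin n)).card = 3 := by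
    rw [Finset.card_insert_of_notMem (by simp [Fin.ext_iff]),
      Finset.card_insert_of_notMem (by simp [Fin.ext_iff]), Finset.card_singleton]
  simp only [Finset.card_univ, Fintype.card_fin] at h
  omega

-- Γ1 entries
lemma g1_zero (hn : 5 ≤ n) (i j : Fin n) (hi : i.val ≤ 1) (hj : ¬ j.val ≤ 2) :
    (Gamma1 n).adjMatrix i j = 0 := by
  rw [SignedGraph.adjMatrix, if_neg]
  rintro ⟨hne, h⟩
  omega

lemma g1_zero' (hn : 5 ≤ n) (i j : Fin n) (hi : ¬ i.val ≤ 2) (hj : j.val ≤ 1) :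
    (Gamma1 n).adjMatrix i j = 0 := by
  rw [SignedGraph.adjMatrix, if_neg]
  rintro ⟨hne, h⟩
  omega

lemma g1_pos (hn : 5 ≤ n) (i j : Fin n) (hne : i ≠ j)
    (h : (2 ≤ i.val ∧ 2 ≤ j.val) ∨ (i.val ≤ 2 ∧ j.val ≤ 2 ∧ ¬(i.val ≤ 1 ∧ j.val ≤ 1))) :
    (Gamma1 n).adjMatrix i j = 1 := by
  have hadj : (Gamma1 n).G.Adj i j := by
    refine ⟨hne, ?_⟩
    show 2 ≤ min i.val j.val ∨ max i.val j.val ≤ 2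
    omega
  rw [SignedGraph.adjMatrix, if_pos hadj]
  have hs : (Gamma1 n).sign i j =
      if (i.val = 0 ∧ j.val = 1) ∨ (i.val = 1 ∧ j.val = 0) then (-1:ℤ) else 1 := rfl
  rw [hs, if_neg (by omega)]
  norm_num

lemma g1_neg (hn : 5 ≤ n) (i j : Fin n)
    (h : (i.val = 0 ∧ j.val = 1) ∨ (i.val = 1 ∧ j.val = 0)) :
    (Gamma1 n).adjMatrix i j = -1 := by
  have hadj : (Gamma1 n).G.Adj i j := by
    refine ⟨by intro he; rw [he] at h; omega, ?_⟩
    show 2 ≤ min i.val j.val ∨ max i.val j.val ≤ 2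
    omega
  rw [SignedGraph.adjMatrix, if_pos hadj]
  have hs : (Gamma1 n).sign i j =
      if (i.val = 0 ∧ j.val = 1) ∨ (i.val = 1 ∧ j.val = 0) then (-1:ℤ) else 1 := rfl
  rw [hs, if_pos (by omega)]
  norm_num

-- Γ1 rows
lemma g1_row0 (hn : 5 ≤ n) (x : Fin n → ℝ) :
    ((Gamma1 n).adjMatrix *ᵥ x) ⟨0, by omega⟩ = -x ⟨1, by omega⟩ + x ⟨2, by omega⟩ := by
  simp only [Matrix.mulVec, dotProduct]
  rw [sum_split3 hn]
  rw [adj_diag, g1_neg hn _ _ (by norm_num), g1_pos hn _ _ (by simp [Fin.ext_iff]) (by norm_num),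
    Finset.sum_eq_zero (fun j hj => by
      rw [g1_zero hn _ _ (by norm_num) (by simpa using (Finset.mem_filter.mp hj).2), zero_mul])]
  ring

lemma g1_row1 (hn : 5 ≤ n) (x : Fin n → ℝ) :
    ((Gamma1 n).adjMatrix *ᵥ x) ⟨1, by omega⟩ = -x ⟨0, by omega⟩ + x ⟨2, by omega⟩ := by
  simp only [Matrix.mulVec, dotProduct]
  rw [sum_split3 hn]
  rw [adj_diag, g1_neg hn _ _ (by norm_num), g1_pos hn _ _ (by simp [Fin.ext_iff]) (by norm_num),
    Finset.sum_eq_zero (fun j hj => by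
      rw [g1_zero hn _ _ (by norm_num) (by simpa using (Finset.mem_filter.mp hj).2), zero_mul])]
  ring

lemma g1_row2 (hn : 5 ≤ n) (x : Fin n → ℝ) :
    ((Gamma1 n).adjMatrix *ᵥ x) ⟨2, by omega⟩ = x ⟨0, by omega⟩ + x ⟨1, by omega⟩ +
      ∑ j ∈ Finset.univ.filter (fun j : Fin n => ¬ j.val ≤ 2), x j := by
  simp only [Matrix.mulVec, dotProduct]
  rw [sum_split3 hn]
  rw [adj_diag, g1_pos hn _ _ (by simp [Fin.ext_iff]) (by norm_num),
    g1_pos hn _ _ (by simp [Fin.ext_iff]) (by norm_num),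
    Finset.sum_congr rfl (fun j hj => by
      have hj2 : ¬ j.val ≤ 2 := by simpa using (Finset.mem_filter.mp hj).2
      rw [g1_pos hn _ _ (by simp only [ne_eq, Fin.ext_iff]; omega)
        (Or.inl ⟨by norm_num, by omega⟩), one_mul])]
  ring

lemma g1_row3 (hn : 5 ≤ n) (x : Fin n → ℝ) (i : Fin n) (hi : ¬ i.val ≤ 2) :
    ((Gamma1 n).adjMatrix *ᵥ x) i = x ⟨2, by omega⟩ +
      ((∑ j ∈ Finset.univ.filter (fun j : Fin n => ¬ j.val ≤ 2), x j) - x i) := by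
  simp only [Matrix.mulVec, dotProduct]
  rw [sum_split3 hn]
  have hf : ∀ j ∈ Finset.univ.filter (fun j : Fin n => ¬ j.val ≤ 2),
      (Gamma1 n).adjMatrix i j * x j = x j - (if j = i then x j else 0) := by
    intro j hj
    have hj2 : ¬ j.val ≤ 2 := by simpa using (Finset.mem_filter.mp hj).2
    by_cases hji : j = i
    · subst hji
      rw [adj_diag, zero_mul, if_pos rfl]
      ring
    · rw [g1_pos hn _ _ (fun he => hji he.symm) (Or.inl ⟨by omega, by omega⟩),
        one_mul, if_neg hji]
      ring
  rw [Finset.sum_congr rfl hf, Finset.sum_sub_distrib,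
    Finset.sum_ite_eq' _ i x, if_pos (by simpa using hi),
    g1_zero' hn _ _ hi (by norm_num), g1_zero' hn _ _ hi (by norm_num),
    g1_pos hn _ _ (by simp only [ne_eq, Fin.ext_iff]; omega)
      (Or.inl ⟨by omega, by norm_num⟩)]
  ring

end Rows1
section Final
open Matrix Finset

variable {n : ℕ}

lemma ycast (hn : 5 ≤ n) : ((n - 3 : ℕ) : ℝ) = (n:ℝ) - 3 := by
  have : (3:ℕ) ≤ n := by omega
  push_cast [Nat.cast_sub this]
  ring

lemma g1_quad (hn : 5 ≤ n) :
    (fun i : Fin n => if i.val ≤ 1 then (1:ℝ) else (n:ℝ)-2) ⬝ᵥ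
        ((Gamma1 n).adjMatrix *ᵥ (fun i : Fin n => if i.val ≤ 1 then (1:ℝ) else (n:ℝ)-2)) =
      4*(n:ℝ) - 10 + ((n:ℝ)-3)*((n:ℝ)-2)^3 ∧
    (fun i : Fin n => if i.val ≤ 1 then (1:ℝ) else (n:ℝ)-2) ⬝ᵥ
        (fun i : Fin n => if i.val ≤ 1 then (1:ℝ) else (n:ℝ)-2) =
      2 + ((n:ℝ)-2)^3 := by
  set y : Fin n → ℝ := fun i => if i.val ≤ 1 then (1:ℝ) else (n:ℝ)-2 with hy
  have hy0 : y ⟨0, by omega⟩ = 1 := if_pos (by norm_num)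
  have hy1 : y ⟨1, by omega⟩ = 1 := if_pos (by norm_num)
  have hy2 : y ⟨2, by omega⟩ = (n:ℝ)-2 := if_neg (by norm_num)
  have hyF : ∀ j ∈ Finset.univ.filter (fun j : Fin n => ¬ j.val ≤ 2), y j = (n:ℝ)-2 := by
    intro j hj
    have : ¬ j.val ≤ 2 := by simpa using (Finset.mem_filter.mp hj).2
    exact if_neg (by omega)
  have hT : ∑ j ∈ Finset.univ.filter (fun j : Fin n => ¬ j.val ≤ 2), y j =
      ((n:ℝ)-3) * ((n:ℝ)-2) := by
    rw [Finset.sum_congr rfl hyF, Finset.sum_const, card_F3 hn, nsmul_eq_mul, ycast hn]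
  constructor
  · show ∑ i, y i * ((Gamma1 n).adjMatrix *ᵥ y) i = _
    rw [sum_split3 hn (fun i => y i * ((Gamma1 n).adjMatrix *ᵥ y) i)]
    rw [Finset.sum_congr rfl (fun i hi => by
      have hi2 : ¬ i.val ≤ 2 := by simpa using (Finset.mem_filter.mp hi).2
      rw [g1_row3 hn y i hi2, hyF i hi, hy2, hT])]
    rw [g1_row0 hn y, g1_row1 hn y, g1_row2 hn y, hy0, hy1, hy2, hT,
      Finset.sum_const, card_F3 hn, nsmul_eq_mul, ycast hn]
    ring
  · show ∑ i, y i * y i = _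
    rw [sum_split3 hn (fun i => y i * y i)]
    rw [Finset.sum_congr rfl (fun i hi => by rw [hyF i hi]),
      Finset.sum_const, card_F3 hn, nsmul_eq_mul, ycast hn, hy0, hy1, hy2]
    ring

lemma g1_lower (hn : 5 ≤ n) (t : ℝ)
    (ht : t * (2 + ((n:ℝ)-2)^3) < 4*(n:ℝ) - 10 + ((n:ℝ)-3)*((n:ℝ)-2)^3) :
    t < (Gamma1 n).lambda1 := by
  obtain ⟨hq, hnorm⟩ := g1_quad hn
  set y : Fin n → ℝ := fun i => if i.val ≤ 1 then (1:ℝ) else (n:ℝ)-2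
  have hray := myrayleigh (adj_isHermitian (Gamma1 n)) y
  rw [hq, hnorm] at hray
  have hN : (0:ℝ) < 2 + ((n:ℝ)-2)^3 := by
    have h5 : (5:ℝ) ≤ (n:ℝ) := by exact_mod_cast hn
    have h3 : (0:ℝ) ≤ (n:ℝ) - 2 := by linarith
    nlinarith [mul_nonneg (mul_nonneg h3 h3) h3]
  have hfin := lt_of_lt_of_le ht hray
  rw [SignedGraph.lambda1]
  exact lt_of_mul_lt_mul_right hfin hN.le

end Final
section Upper
open Matrix Finset

variable {n : ℕ}

lemma xcast (hn : 5 ≤ n) : ((n - 4 : ℕ) : ℝ) = (n:ℝ) - 4 := by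
  have : (4:ℕ) ≤ n := by omega
  push_cast [Nat.cast_sub this]
  ring

lemma g2_upper (hn : 5 ≤ n) (t : ℝ) (ht2 : 2 ≤ t) (htm : (n:ℝ) - 4 ≤ t + 1)
    (hpoly : ∀ l : ℝ, t < l →
      0 < l*(l+1)*(l+1-((n:ℝ)-4)) - 4*(l+1-((n:ℝ)-4)) - 2*((n:ℝ)-4)*(l+1)) :
    (Gamma2 n).lambda1 ≤ t := by
  rw [SignedGraph.lambda1]
  apply csSup_le
  · exact ⟨_, (adj_isHermitian (Gamma2 n)).eigenvalues_mem_spectrum_real ⟨0, by omega⟩⟩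
  intro l hl
  by_contra hlt
  push_neg at hlt
  obtain ⟨x, hx0, hx⟩ := myexists_eig _ hl
  set m : ℝ := (n:ℝ) - 4 with hm
  have hl2 : 2 < l := lt_of_le_of_lt ht2 hlt
  have hlm : 0 < l + 1 - m := by linarith
  set i0 : Fin n := ⟨0, by omega⟩
  set i1 : Fin n := ⟨1, by omega⟩
  set i2 : Fin n := ⟨2, by omega⟩
  set i3 : Fin n := ⟨3, by omega⟩
  set T : ℝ := ∑ j ∈ Finset.univ.filter (fun j : Fin n => ¬ j.val ≤ 3), x j with hT
  have smul_app : ∀ i : Fin n, (l • x) i = l * x i := fun i => rfl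
  have e0 : l * x i0 = -x i1 + x i2 + x i3 := by
    rw [← smul_app i0, ← hx]; exact g2_row0 hn x
  have e1 : l * x i1 = -x i0 + x i2 + x i3 := by
    rw [← smul_app i1, ← hx]; exact g2_row1 hn x
  have e2 : l * x i2 = x i0 + x i1 + T := by
    rw [← smul_app i2, ← hx]; exact g2_row2 hn x
  have e3 : l * x i3 = x i0 + x i1 + T := by
    rw [← smul_app i3, ← hx]; exact g2_row3 hn x
  have e4 : ∀ i : Fin n, ¬ i.val ≤ 3 → l * x i = x i2 + x i3 + (T - x i) := by
    intro i hi
    rw [← smul_app i, ← hx]; exact g2_row4 hn x i hi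
  -- x i2 = x i3
  have h23 : x i2 = x i3 := by
    have : l * x i2 = l * x i3 := by rw [e2, e3]
    exact mul_left_cancel₀ (by linarith) this
  -- x i0 = x i1
  have h01 : x i0 = x i1 := by
    have hz : (l - 1) * (x i0 - x i1) = 0 := by linear_combination e0 - e1
    rcases mul_eq_zero.mp hz with h | h
    · linarith
    · linarith [sub_eq_zero.mp h]
  -- summed equation over F4
  have hcard : ((Finset.univ.filter (fun j : Fin n => ¬ j.val ≤ 3)).card : ℝ) = m := by
    rw [card_F4 hn, xcast hn]
  have eT : (l + 1 - m) * T = 2 * m * x i2 := by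
    have hsum : l * T = ∑ i ∈ Finset.univ.filter (fun j : Fin n => ¬ j.val ≤ 3),
        (x i2 + x i3 + (T - x i)) := by
      rw [Finset.mul_sum]
      exact Finset.sum_congr rfl (fun i hi =>
        e4 i (by simpa using (Finset.mem_filter.mp hi).2))
    rw [Finset.sum_add_distrib, Finset.sum_const, Finset.sum_sub_distrib,
      Finset.sum_const, nsmul_eq_mul, nsmul_eq_mul, hcard, ← hT] at hsum
    rw [← h23] at hsum
    linarith [hsum]
  have sa : (l + 1) * x i0 = 2 * x i2 := by
    rw [← h01, ← h23] at e0
    linarith [e0]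
  have sc : l * x i2 = 2 * x i0 + T := by
    rw [← h01] at e2
    linarith [e2]
  by_cases hc : x i2 = 0
  · -- everything vanishes
    have ha : x i0 = 0 := by
      have hsa : (l + 1) * x i0 = 0 := by rw [sa, hc]; ring
      rcases mul_eq_zero.mp hsa with h | h
      · linarith
      · exact h
    have hTz : T = 0 := by
      have := eT
      rw [hc] at this
      have : (l + 1 - m) * T = 0 := by linarith [this]
      rcases mul_eq_zero.mp this with h | h
      · linarith
      · exact h
    apply hx0
    funext i
    show x i = 0
    by_cases hi : i.val ≤ 3
    · have hv : i.val = 0 ∨ i.val = 1 ∨ i.val = 2 ∨ i.val = 3 := by omega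
      rcases hv with h | h | h | h
      · have : i = i0 := Fin.ext (by simpa using h)
        rw [this]; exact ha
      · have : i = i1 := Fin.ext (by simpa using h)
        rw [this, ← h01]; exact ha
      · have : i = i2 := Fin.ext (by simpa using h)
        rw [this]; exact hc
      · have : i = i3 := Fin.ext (by simpa using h)
        rw [this, ← h23]; exact hc
    · have := e4 i hi
      rw [hc, ← h23, hc, hTz] at this
      have : (l + 1) * x i = 0 := by linarith [this]
      rcases mul_eq_zero.mp this with h | h
      · linarith
      · exact h
  · have hzero : (l*(l+1)*(l+1-m) - 4*(l+1-m) - 2*m*(l+1)) * x i2 = 0 := by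
      linear_combination (l+1)*(l+1-m)*sc + 2*(l+1-m)*sa + (l+1)*eT
    rcases mul_eq_zero.mp hzero with h | h
    · have := hpoly l hlt
      linarith
    · exact hc h

end Upper
theorem lambda1_Gamma2_lt_lambda1_Gamma1 (n : ℕ) (hn : 5 ≤ n) :
    (Gamma2 n).lambda1 < (Gamma1 n).lambda1 := by
  by_cases h5 : n = 5
  · subst h5
    have hup : (Gamma2 5).lambda1 ≤ 11/5 := by
      apply g2_upper (by norm_num) _ (by norm_num) (by push_cast; norm_num)
      intro l hl
      have hc : ((5:ℕ):ℝ) - 4 = 1 := by norm_num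
      rw [hc]
      nlinarith [sq_nonneg (l - 11/5), mul_pos (sub_pos.2 hl) (sub_pos.2 hl)]
    have hlow : (11/5 : ℝ) < (Gamma1 5).lambda1 := by
      apply g1_lower (by norm_num)
      push_cast
      norm_num
    linarith
  · have hn6 : 6 ≤ n := by omega
    have h6 : (6:ℝ) ≤ (n:ℝ) := by exact_mod_cast hn6
    have hup : (Gamma2 n).lambda1 ≤ (n:ℝ) - 3 := by
      apply g2_upper hn _ (by linarith) (by linarith)
      intro l hl
      have hm : (2:ℝ) ≤ (n:ℝ) - 4 := by linarith
      have hl' : (n:ℝ) - 4 + 1 < l := by linarith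
      nlinarith [sq_nonneg (l - ((n:ℝ)-4) - 1), mul_pos (sub_pos.2 hl') (sub_pos.2 hl'),
        mul_pos (mul_pos (sub_pos.2 hl') (sub_pos.2 hl')) (sub_pos.2 hl'),
        mul_nonneg (mul_nonneg (sub_nonneg.2 hl'.le) (sub_nonneg.2 hl'.le))
          (sub_nonneg.2 hm)]
    have hlow : (n:ℝ) - 3 < (Gamma1 n).lambda1 := by
      apply g1_lower hn
      nlinarith [h6]
    linarith
end

section
/- For every n ≥ 7, the adjacency matrix A(Γ2) of the signed graph Γ2 of order n has −1 as an eigenvalue with multiplicity exactly n − 5, and has 0 as an eigenvalue (with multiplicity at least 1). -/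
open scoped BigOperators

section Gamma2Proof

open Matrix Polynomial

namespace Gamma2Aux

lemma gamma2_adj_iff {N : ℕ} (i j : Fin N) :
    (Gamma2 N).G.Adj i j ↔ (i.val ≠ j.val ∧
      ((i.val ≤ 1 ∧ j.val ≤ 3) ∨ (j.val ≤ 1 ∧ i.val ≤ 3) ∨
       (2 ≤ i.val ∧ i.val ≤ 3 ∧ 4 ≤ j.val) ∨ (2 ≤ j.val ∧ j.val ≤ 3 ∧ 4 ≤ i.val) ∨
       (4 ≤ i.val ∧ 4 ≤ j.val))) := by
  show (i ≠ j ∧ _) ↔ _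
  rw [Ne, Ne, Fin.ext_iff]

lemma gamma2_entry {N : ℕ} (i j : Fin N) :
    (Gamma2 N).adjMatrix i j =
      if i.val ≠ j.val ∧
        ((i.val ≤ 1 ∧ j.val ≤ 3) ∨ (j.val ≤ 1 ∧ i.val ≤ 3) ∨
         (2 ≤ i.val ∧ i.val ≤ 3 ∧ 4 ≤ j.val) ∨ (2 ≤ j.val ∧ j.val ≤ 3 ∧ 4 ≤ i.val) ∨
         (4 ≤ i.val ∧ 4 ≤ j.val))
      then (if (i.val = 0 ∧ j.val = 1) ∨ (i.val = 1 ∧ j.val = 0) then (-1:ℝ) else 1)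
      else 0 := by
  rw [SignedGraph.adjMatrix]
  by_cases h : (Gamma2 N).G.Adj i j
  · rw [if_pos h, if_pos ((gamma2_adj_iff i j).mp h)]
    show (((if (i.val = 0 ∧ j.val = 1) ∨ (i.val = 1 ∧ j.val = 0) then (-1:ℤ) else 1) : ℤ) : ℝ) = _
    split_ifs <;> norm_num
  · rw [if_neg h, if_neg (fun hc => h ((gamma2_adj_iff i j).mpr hc))]

def A11 : Matrix (Fin 5) (Fin 5) ℝ :=
  !![0,-1,1,1,0; -1,0,1,1,0; 1,1,0,0,1; 1,1,0,0,1; 0,0,1,1,0]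
def A12 (k : ℕ) : Matrix (Fin 5) (Fin k) ℝ := Matrix.of fun i _ => if 2 ≤ i.val then 1 else 0
def A21 (k : ℕ) : Matrix (Fin k) (Fin 5) ℝ := Matrix.of fun _ j => if 2 ≤ j.val then 1 else 0
def A22 (k : ℕ) : Matrix (Fin k) (Fin k) ℝ := Matrix.of fun i j => if i = j then 0 else 1
def M5 (k : ℕ) : Matrix (Fin 5) (Fin 5) ℝ :=
  !![0,-1,1,1,0; -1,0,1,1,0; 1,1,0,0,1; 1,1,0,0,1; 0,0,(k:ℝ)+1,(k:ℝ)+1,(k:ℝ)]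
def U (k : ℕ) : Matrix (Fin 5) (Fin k) ℝ := Matrix.of fun i _ => if i.val = 4 then -1 else 0

lemma v0 : ((0:Fin 5):ℕ) = 0 := rfl
lemma v1 : ((1:Fin 5):ℕ) = 1 := rfl
lemma v2 : ((2:Fin 5):ℕ) = 2 := rfl
lemma v3 : ((3:Fin 5):ℕ) = 3 := rfl
lemma v4 : ((4:Fin 5):ℕ) = 4 := rfl

lemma reindex_adj (k : ℕ) :
    Matrix.reindex finSumFinEquiv.symm finSumFinEquiv.symm ((Gamma2 (5+k)).adjMatrix)
      = fromBlocks A11 (A12 k) (A21 k) (A22 k) := by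
  ext x y
  cases x with
  | inl i => cases y with
    | inl j =>
      simp only [reindex_apply, submatrix_apply, Equiv.symm_symm, finSumFinEquiv_apply_left,
        fromBlocks_apply₁₁, gamma2_entry, Fin.coe_castAdd]
      fin_cases i <;> fin_cases j <;> norm_num [A11]
    | inr j =>
      simp only [reindex_apply, submatrix_apply, Equiv.symm_symm, finSumFinEquiv_apply_left,
        finSumFinEquiv_apply_right, fromBlocks_apply₁₂, gamma2_entry, Fin.coe_castAdd,
        Fin.coe_natAdd, A12, Matrix.of_apply]
      have hi := i.isLt
      split_ifs <;> (try norm_num) <;> omega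
  | inr i => cases y with
    | inl j =>
      simp only [reindex_apply, submatrix_apply, Equiv.symm_symm, finSumFinEquiv_apply_left,
        finSumFinEquiv_apply_right, fromBlocks_apply₂₁, gamma2_entry, Fin.coe_castAdd,
        Fin.coe_natAdd, A21, Matrix.of_apply]
      have hj := j.isLt
      split_ifs <;> (try norm_num) <;> omega
    | inr j =>
      simp only [reindex_apply, submatrix_apply, Equiv.symm_symm,
        finSumFinEquiv_apply_right, fromBlocks_apply₂₂, gamma2_entry,
        Fin.coe_natAdd, A22, Matrix.of_apply, Fin.ext_iff]
      split_ifs <;> (try norm_num) <;> omega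

lemma U_mul_A21 (k : ℕ) :
    U k * A21 k = Matrix.of fun i j => if i.val = 4 ∧ 2 ≤ j.val then -(k:ℝ) else 0 := by
  ext i j
  simp only [Matrix.mul_apply, U, A21, Matrix.of_apply]
  rw [Finset.sum_const, Finset.card_univ, Fintype.card_fin]
  split_ifs with h1 h2 h3 <;> simp_all [nsmul_eq_mul]

lemma U_mul_A22 (k : ℕ) :
    U k * A22 k = Matrix.of fun i _ => if i.val = 4 then -((k:ℝ)-1) else 0 := by
  ext i j
  simp only [Matrix.mul_apply, U, A22, Matrix.of_apply]
  by_cases hi : i.val = 4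
  · rw [if_pos hi, if_pos hi]
    have h1 : ∀ l : Fin k, (-1 : ℝ) * (if l = j then 0 else 1)
        = -1 + (if l = j then (1:ℝ) else 0) := by intro l; split_ifs <;> ring
    simp only [h1]
    rw [Finset.sum_add_distrib, Finset.sum_const, Finset.card_univ, Fintype.card_fin,
      Finset.sum_ite_eq' Finset.univ j (fun _ => (1:ℝ))]
    simp [nsmul_eq_mul]
    ring
  · rw [if_neg hi, if_neg hi]
    simp

lemma A11_sub (k : ℕ) : A11 + (-(U k)) * A21 k = M5 k := by
  rw [Matrix.neg_mul, U_mul_A21]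
  ext i j
  fin_cases i <;> fin_cases j <;> norm_num [A11, M5, v0, v1, v2, v3, v4] <;> ring

lemma M5_mul_U (k : ℕ) :
    M5 k * U k = Matrix.of fun i _ => -(M5 k i 4) := by
  ext i j
  simp only [Matrix.mul_apply, U, Matrix.of_apply, Fin.sum_univ_five]
  norm_num [v0, v1, v2, v3, v4]

lemma A21_mul_U (k : ℕ) :
    A21 k * U k = Matrix.of fun _ _ => (-1 : ℝ) := by
  ext i j
  simp only [Matrix.mul_apply, U, A21, Matrix.of_apply, Fin.sum_univ_five]
  norm_num [v0, v1, v2, v3, v4]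

lemma top_right (k : ℕ) : M5 k * U k + (A12 k + (-(U k)) * A22 k) = 0 := by
  rw [M5_mul_U, Matrix.neg_mul, U_mul_A22]
  ext i j
  fin_cases i <;> norm_num [M5, A12, v0, v1, v2, v3, v4] <;> simp [Matrix.cons_val]

lemma bottom_right (k : ℕ) : A21 k * U k + A22 k = -1 := by
  rw [A21_mul_U]
  ext i j
  simp only [Matrix.add_apply, Matrix.of_apply, A22, Matrix.neg_apply, Matrix.one_apply]
  split_ifs <;> ring

lemma conj (k : ℕ) :
    fromBlocks 1 (-(U k)) 0 1 * fromBlocks A11 (A12 k) (A21 k) (A22 k) * fromBlocks 1 (U k) 0 1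
      = fromBlocks (M5 k) 0 (A21 k) (-1) := by
  rw [Matrix.fromBlocks_multiply, Matrix.fromBlocks_multiply]
  simp only [Matrix.one_mul, Matrix.mul_one, Matrix.zero_mul, Matrix.mul_zero,
    add_zero, zero_add]
  rw [A11_sub, top_right, bottom_right]

lemma QP (k : ℕ) :
    (fromBlocks 1 (-(U k)) 0 1 : Matrix (Fin 5 ⊕ Fin k) (Fin 5 ⊕ Fin k) ℝ) *
      (fromBlocks 1 (U k) 0 1 : Matrix (Fin 5 ⊕ Fin k) (Fin 5 ⊕ Fin k) ℝ) = 1 := by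
  rw [Matrix.fromBlocks_multiply]
  simp [Matrix.fromBlocks_one]

lemma charpoly_conj {m : Type*} [DecidableEq m] [Fintype m] (A P Q : Matrix m m ℝ)
    (hQP : Q * P = 1) : (Q * A * P).charpoly = A.charpoly := by
  unfold Matrix.charpoly
  have hmap : (Q.map C) * (P.map C) = 1 := by
    rw [← Matrix.map_mul, hQP, Matrix.map_one C C.map_zero C.map_one]
  have key : charmatrix (Q * A * P) = Q.map C * charmatrix A * P.map C := by
    rw [charmatrix, charmatrix]
    rw [Matrix.mul_sub, Matrix.sub_mul]
    congr 1
    · have h1 : (Matrix.scalar m (X : ℝ[X])) = (X : ℝ[X]) • (1 : Matrix m m ℝ[X]) := by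
        ext i j
        by_cases h : i = j <;> simp [h, Matrix.scalar_apply, Matrix.one_apply,
          Matrix.diagonal_apply]
      rw [h1, Matrix.mul_smul, Matrix.mul_one, Matrix.smul_mul, hmap]
    · simp only [RingHom.mapMatrix_apply, Matrix.map_mul]
  rw [key, Matrix.det_mul, Matrix.det_mul]
  have hd : (Q.map C).det * (P.map C).det = 1 := by
    rw [← Matrix.det_mul, hmap, Matrix.det_one]
  calc (Q.map C).det * (charmatrix A).det * (P.map C).det
      = (Q.map C).det * (P.map C).det * (charmatrix A).det := by ring
    _ = (charmatrix A).det := by rw [hd, one_mul]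

lemma charpoly_neg_one (k : ℕ) :
    (-1 : Matrix (Fin k) (Fin k) ℝ).charpoly = (X + 1) ^ k := by
  unfold Matrix.charpoly
  have h : charmatrix (-1 : Matrix (Fin k) (Fin k) ℝ)
      = Matrix.diagonal (fun _ => (X + 1 : ℝ[X])) := by
    ext i j
    by_cases h : i = j
    · subst h
      rw [charmatrix_apply_eq, Matrix.diagonal_apply_eq]
      simp [Matrix.one_apply]
    · rw [charmatrix_apply_ne _ _ _ h, Matrix.diagonal_apply_ne _ h]
      simp [Matrix.one_apply_ne h]
  rw [h, Matrix.det_diagonal, Finset.prod_const, Finset.card_univ, Fintype.card_fin]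

lemma charpoly_eval {m : Type*} [DecidableEq m] [Fintype m] (M : Matrix m m ℝ) (r : ℝ) :
    M.charpoly.eval r = (Matrix.of fun i j => (if i = j then r else 0) - M i j).det := by
  unfold Matrix.charpoly
  rw [show (Polynomial.eval r) = ⇑(Polynomial.evalRingHom r) from rfl, RingHom.map_det]
  congr 1
  ext i j
  by_cases h : i = j
  · subst h; simp [charmatrix_apply_eq]
  · simp [charmatrix_apply_ne _ _ _ h, h]

lemma eval_neg_one (k : ℕ) : (M5 k).charpoly.eval (-1) = 8 * (k:ℝ) + 8 := by
  rw [charpoly_eval]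
  have h : (Matrix.of fun i j => (if i = j then (-1:ℝ) else 0) - M5 k i j)
      = !![-1,1,-1,-1,0; 1,-1,-1,-1,0; -1,-1,-1,0,-1; -1,-1,0,-1,-1;
           0,0,-((k:ℝ)+1),-((k:ℝ)+1),-1-(k:ℝ)] := by
    ext i j
    fin_cases i <;> fin_cases j <;> norm_num [M5, v0, v1, v2, v3, v4, Fin.ext_iff]
  rw [h]
  simp [Matrix.det_succ_row_zero, Fin.sum_univ_succ, Fin.succAbove]
  ring

lemma eval_zero (k : ℕ) : (M5 k).charpoly.eval 0 = 0 := by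
  rw [charpoly_eval]
  have h : (Matrix.of fun i j => (if i = j then (0:ℝ) else 0) - M5 k i j)
      = !![0,1,-1,-1,0; 1,0,-1,-1,0; -1,-1,0,0,-1; -1,-1,0,0,-1;
           0,0,-((k:ℝ)+1),-((k:ℝ)+1),-(k:ℝ)] := by
    ext i j
    fin_cases i <;> fin_cases j <;> norm_num [M5, v0, v1, v2, v3, v4, Fin.ext_iff]
  rw [h]
  simp [Matrix.det_succ_row_zero, Fin.sum_univ_succ, Fin.succAbove]

lemma charpoly_factor (k : ℕ) :
    ((Gamma2 (5+k)).adjMatrix).charpoly = (M5 k).charpoly * (X + 1) ^ k := by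
  rw [← Matrix.charpoly_reindex (finSumFinEquiv.symm : Fin (5+k) ≃ (Fin 5 ⊕ Fin k))
    ((Gamma2 (5+k)).adjMatrix)]
  rw [reindex_adj k]
  rw [← charpoly_conj (fromBlocks A11 (A12 k) (A21 k) (A22 k))
    (fromBlocks 1 (U k) 0 1) (fromBlocks 1 (-(U k)) 0 1) (QP k)]
  rw [conj k, Matrix.charpoly_fromBlocks_zero₁₂, charpoly_neg_one]

end Gamma2Aux

end Gamma2Proof

theorem Gamma2_eigenvalue_multiplicities (n : ℕ) (hn : 7 ≤ n) :
    Polynomial.rootMultiplicity (-1) ((Gamma2 n).adjMatrix.charpoly) = n - 5 ∧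
      1 ≤ Polynomial.rootMultiplicity 0 ((Gamma2 n).adjMatrix.charpoly) := by
  open Polynomial Matrix Gamma2Aux in
  obtain ⟨k, rfl⟩ : ∃ k, n = 5 + k := ⟨n - 5, by omega⟩
  have hXC : (X + 1 : Polynomial ℝ) = X - Polynomial.C (-1) := by
    rw [map_neg, Polynomial.C_1, sub_neg_eq_add]
  have hp0 : (M5 k).charpoly ≠ 0 := (Matrix.charpoly_monic _).ne_zero
  have hx : ((X + 1 : Polynomial ℝ)) ^ k ≠ 0 := by
    apply pow_ne_zero
    rw [hXC]
    exact (Polynomial.monic_X_sub_C _).ne_zero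
  have hfac := charpoly_factor k
  constructor
  · rw [hfac, Polynomial.rootMultiplicity_mul (mul_ne_zero hp0 hx)]
    have h1 : Polynomial.rootMultiplicity (-1) (M5 k).charpoly = 0 := by
      apply Polynomial.rootMultiplicity_eq_zero
      intro hroot
      rw [Polynomial.IsRoot, eval_neg_one] at hroot
      have : (0:ℝ) < 8 * (k:ℝ) + 8 := by positivity
      linarith
    rw [h1, hXC, Polynomial.rootMultiplicity_X_sub_C_pow]
    omega
  · have hne : (M5 k).charpoly * (X + 1 : Polynomial ℝ) ^ k ≠ 0 := mul_ne_zero hp0 hx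
    rw [hfac]
    refine (Polynomial.rootMultiplicity_pos hne).mpr ?_
    rw [Polynomial.IsRoot, Polynomial.eval_mul, eval_zero, zero_mul]
end

section
/- Let n ≥ 6 and let Γ' be a signed graph of order n that attains the maximum largest eigenvalue λ1 among all unbalanced, negative-C4-free signed graphs of order n, and suppose A(Γ') has a nonnegative unit eigenvector corresponding to λ1(Γ'). Then the underlying graph of Γ' is connected. -/
open scoped BigOperators

open Matrix in
lemma rayleigh_le_sSup_spectrum {m : ℕ} (A : Matrix (Fin m) (Fin m) ℝ)
    (hA : A.IsHermitian) (y : Fin m → ℝ) :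
    y ⬝ᵥ A *ᵥ y ≤ sSup (spectrum ℝ A) * (y ⬝ᵥ y) := by
  classical
  set M := sSup (spectrum ℝ A) with hM
  have hbdd : BddAbove (spectrum ℝ A) := (Matrix.finite_spectrum A).bddAbove
  have hle : ∀ i, hA.eigenvalues i ≤ M := fun i =>
    le_csSup hbdd (hA.eigenvalues_mem_spectrum_real i)
  set V : Matrix (Fin m) (Fin m) ℝ := (hA.eigenvectorUnitary : Matrix (Fin m) (Fin m) ℝ) with hV
  have hstar : star V = Vᵀ := by
    rw [Matrix.star_eq_conjTranspose, Matrix.conjTranspose_eq_transpose_of_trivial]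
  have hVV : V * Vᵀ = 1 := by
    rw [← hstar]; exact (Matrix.mem_unitaryGroup_iff).mp (hA.eigenvectorUnitary).2
  set z : Fin m → ℝ := Vᵀ *ᵥ y with hz
  have hspec : A = V * Matrix.diagonal hA.eigenvalues * Vᵀ := by
    have := hA.spectral_theorem
    simp only [Unitary.conjStarAlgAut_apply, Unitary.coe_star] at this
    rw [← hV, hstar] at this
    exact this
  have hVw : ∀ w : Fin m → ℝ, y ⬝ᵥ (V *ᵥ w) = z ⬝ᵥ w := by
    intro w
    rw [dotProduct_mulVec, ← Matrix.mulVec_transpose]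
  have key1 : y ⬝ᵥ A *ᵥ y = z ⬝ᵥ (Matrix.diagonal hA.eigenvalues *ᵥ z) := by
    conv_lhs => rw [hspec]
    rw [← Matrix.mulVec_mulVec, ← Matrix.mulVec_mulVec, hVw]
  have hVz : V *ᵥ z = y := by rw [hz, Matrix.mulVec_mulVec, hVV, Matrix.one_mulVec]
  have key2 : y ⬝ᵥ y = z ⬝ᵥ z := by
    have h2 := hVw z
    rw [hVz] at h2
    exact h2
  rw [key1, key2]
  simp only [dotProduct, Matrix.mulVec_diagonal, Finset.mul_sum]
  apply Finset.sum_le_sum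
  intro i _
  have h : z i * (hA.eigenvalues i * z i) = hA.eigenvalues i * (z i * z i) := by ring
  rw [h]
  exact mul_le_mul_of_nonneg_right (hle i) (mul_self_nonneg _)

namespace SignedGraph

open Matrix

variable {n : ℕ}

lemma adjMatrix_symm_entry (Γ : SignedGraph n) (i j : Fin n) :
    Γ.adjMatrix i j = Γ.adjMatrix j i := by
  unfold adjMatrix
  by_cases h : Γ.G.Adj i j
  · rw [if_pos h, if_pos h.symm, Γ.sign_symm]
  · rw [if_neg h, if_neg (fun h' => h h'.symm)]

lemma adjMatrix_isHermitian (Γ : SignedGraph n) : Γ.adjMatrix.IsHermitian := by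
  ext i j
  rw [Matrix.conjTranspose_apply, star_trivial, adjMatrix_symm_entry]

lemma adjMatrix_transpose (Γ : SignedGraph n) : Γ.adjMatrixᵀ = Γ.adjMatrix := by
  ext i j
  rw [Matrix.transpose_apply, adjMatrix_symm_entry]

lemma adjMatrix_diag (Γ : SignedGraph n) (i : Fin n) : Γ.adjMatrix i i = 0 := by
  unfold adjMatrix
  rw [if_neg (Γ.G.loopless.irrefl i)]

/-- Rayleigh bound specialized to signed graphs. -/
lemma rayleigh_le_lambda1 (Γ : SignedGraph n) (y : Fin n → ℝ) :
    y ⬝ᵥ Γ.adjMatrix *ᵥ y ≤ Γ.lambda1 * (y ⬝ᵥ y) :=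
  rayleigh_le_sSup_spectrum _ Γ.adjMatrix_isHermitian y


lemma quad_std (i j : Fin n) (w z : Fin n → ℝ) :
    w ⬝ᵥ (Matrix.single i j (1:ℝ) *ᵥ z) = w i * z j := by
  classical
  simp [Matrix.mulVec, dotProduct, Matrix.single, ite_and,
    Finset.mul_sum, mul_ite, mul_comm, mul_assoc, mul_left_comm]

lemma walkSign_transfer {Γ Γ' : SignedGraph n} {a : Fin n} (c : Γ.G.Walk a a)
    (h : ∀ e ∈ c.edges, e ∈ Γ'.G.edgeSet)
    (hsg : ∀ e ∈ c.edges, Γ'.signEdge e = Γ.signEdge e) :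
    Γ'.walkSign (c.transfer Γ'.G h) = Γ.walkSign c := by
  unfold walkSign
  rw [SimpleGraph.Walk.edges_transfer]
  exact congrArg List.prod (List.map_congr_left hsg)

end SignedGraph
open Matrix SimpleGraph in
theorem extremal_connected (n : ℕ) (hn : 6 ≤ n) (Γ' : SignedGraph n)
    (hub : Γ'.Unbalanced) (hfree : Γ'.NegC4Free)
    (hmax : ∀ Γ : SignedGraph n, Γ.Unbalanced → Γ.NegC4Free → Γ.lambda1 ≤ Γ'.lambda1)
    (x : Fin n → ℝ) (hx : Γ'.adjMatrix.mulVec x = Γ'.lambda1 • x)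
    (hnn : ∀ i, 0 ≤ x i) (hunit : ∑ i, x i ^ 2 = 1) :
    Γ'.G.Connected := by
  classical
  by_contra hconn
  -- a vertex with a positive eigenvector entry
  have hxne : ∃ i, 0 < x i := by
    by_contra h
    push_neg at h
    have hz : ∀ i, x i = 0 := fun i => le_antisymm (h i) (hnn i)
    rw [Finset.sum_congr rfl (fun i _ => by rw [hz i])] at hunit
    simp at hunit
  obtain ⟨u, hu⟩ := hxne
  -- a vertex not reachable from u
  have hv : ∃ v, ¬ Γ'.G.Reachable u v := by
    by_contra h
    push_neg at h
    haveI : Nonempty (Fin n) := ⟨⟨0, by omega⟩⟩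
    exact hconn ⟨fun a b => (h a).symm.trans (h b)⟩
  obtain ⟨v, huv⟩ := hv
  have hne_uv : u ≠ v := fun h => huv (h ▸ SimpleGraph.Reachable.refl u)
  have hnadj : ¬ Γ'.G.Adj u v := fun h => huv h.reachable
  set lam := Γ'.lambda1 with hl
  -- the augmented signed graph
  obtain ⟨Γ, hG, hsgn⟩ : ∃ Γ : SignedGraph n, Γ.G = Γ'.G ⊔ SimpleGraph.edge u v ∧
      ∀ i j, Γ.sign i j = if Γ'.G.Adj i j then Γ'.sign i j else 1 := by
    refine ⟨{ G := Γ'.G ⊔ SimpleGraph.edge u v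
              sign := fun i j => if Γ'.G.Adj i j then Γ'.sign i j else 1
              sign_symm := ?_
              sign_pm := ?_ }, rfl, fun i j => rfl⟩
    · intro i j
      by_cases h : Γ'.G.Adj i j
      · rw [if_pos h, if_pos h.symm, Γ'.sign_symm]
      · rw [if_neg h, if_neg fun h' => h h'.symm]
    · intro i j _
      by_cases h : Γ'.G.Adj i j
      · rw [if_pos h]; exact Γ'.sign_pm i j h
      · rw [if_neg h]; exact Or.inl rfl
  have hGle : Γ'.G ≤ Γ.G := by rw [hG]; exact le_sup_left
  -- sign agreement on old edges
  have hsg : ∀ e ∈ Γ'.G.edgeSet, Γ.signEdge e = Γ'.signEdge e := by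
    intro e he
    induction e using Sym2.ind with
    | _ i j =>
      rw [SimpleGraph.mem_edgeSet] at he
      simp only [SignedGraph.signEdge, Sym2.lift_mk]
      rw [hsgn, if_pos he]
  -- Γ is unbalanced
  have hΓub : Γ.Unbalanced := by
    obtain ⟨w0, c, hc, hcs⟩ := hub
    refine ⟨w0, c.transfer Γ.G
      (fun e he => (SimpleGraph.edgeSet_mono hGle) (c.edges_subset_edgeSet he)),
      hc.transfer _, ?_⟩
    rw [SignedGraph.walkSign_transfer c _
      (fun e he => hsg e (c.edges_subset_edgeSet he))]
    exact hcs
  -- the new edge is a bridge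
  have hedge : Γ.G.edgeSet = Γ'.G.edgeSet ∪ {s(u, v)} := by
    rw [hG, SimpleGraph.edgeSet_sup, SimpleGraph.edge_edgeSet_of_ne hne_uv]
  have hbridge : Γ.G.IsBridge s(u, v) := by
    rw [SimpleGraph.isBridge_iff]
    · intro hr
      refine huv (SimpleGraph.Reachable.mono ?_ hr)
      intro a b hab
      rw [SimpleGraph.deleteEdges_adj, hG, SimpleGraph.sup_adj] at hab
      rcases hab with ⟨h1 | h1, h2⟩
      · exact h1
      · rw [SimpleGraph.edge_adj] at h1
        rcases h1.1 with ⟨rfl, rfl⟩ | ⟨rfl, rfl⟩ <;> simp [Sym2.eq_swap] at h2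
  have hnomem : ∀ (a : Fin n) (c : Γ.G.Walk a a), c.IsCycle → s(u, v) ∉ c.edges :=
    fun a c hc => hbridge.notMem_edges_of_isCycle hc
  -- Γ is negative-C4-free
  have hΓfree : Γ.NegC4Free := by
    intro a c hc hlen
    have hmem : ∀ e ∈ c.edges, e ∈ Γ'.G.edgeSet := by
      intro e he
      have h1 := c.edges_subset_edgeSet he
      rw [hedge] at h1
      rcases h1 with h1 | h1
      · exact h1
      · rw [Set.mem_singleton_iff] at h1
        exact absurd (h1 ▸ he) (hnomem a c hc)
    rw [← SignedGraph.walkSign_transfer c hmem (fun e he => (hsg e (hmem e he)).symm)]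
    exact hfree a (c.transfer _ hmem) (hc.transfer _)
      (by rw [SimpleGraph.Walk.length_transfer]; exact hlen)
  -- matrix decomposition
  have hdecomp : Γ.adjMatrix = Γ'.adjMatrix +
      (Matrix.single u v (1:ℝ) + Matrix.single v u 1) := by
    ext i j
    simp only [Matrix.add_apply, Matrix.single, Matrix.of_apply]
    unfold SignedGraph.adjMatrix
    by_cases h1 : Γ'.G.Adj i j
    · have hΓadj : Γ.G.Adj i j := hGle h1
      rw [if_pos hΓadj, if_pos h1, hsgn, if_pos h1,
        if_neg (by rintro ⟨rfl, rfl⟩; exact hnadj h1),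
        if_neg (by rintro ⟨rfl, rfl⟩; exact hnadj h1.symm)]
      ring
    · by_cases h2 : (u = i ∧ v = j) ∨ (v = i ∧ u = j)
      · rcases h2 with ⟨rfl, rfl⟩ | ⟨rfl, rfl⟩
        · have hΓadj : Γ.G.Adj u v := by
            rw [hG, SimpleGraph.sup_adj, SimpleGraph.edge_adj]
            exact Or.inr ⟨Or.inl ⟨rfl, rfl⟩, hne_uv⟩
          rw [if_pos hΓadj, hsgn]
          simp only [if_neg h1]
          simp [hne_uv.symm]
        · have hΓadj : Γ.G.Adj v u := by
            rw [hG, SimpleGraph.sup_adj, SimpleGraph.edge_adj]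
            exact Or.inr ⟨Or.inr ⟨rfl, rfl⟩, hne_uv.symm⟩
          rw [if_pos hΓadj, hsgn]
          simp only [if_neg h1]
          simp [hne_uv]
      · push_neg at h2
        have hΓadj : ¬ Γ.G.Adj i j := by
          rw [hG, SimpleGraph.sup_adj, SimpleGraph.edge_adj]
          rintro (h | ⟨⟨rfl, rfl⟩ | ⟨rfl, rfl⟩, hne⟩)
          · exact h1 h
          · exact h2.1 rfl rfl
          · exact h2.2 rfl rfl
        rw [if_neg hΓadj, if_neg h1,
          if_neg (fun h : u = i ∧ v = j => h2.1 h.1 h.2),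
          if_neg (fun h : v = i ∧ u = j => h2.2 h.1 h.2)]
        ring
  -- quadratic form computations
  have hL : (0:ℝ) < max lam 1 := lt_of_lt_of_le one_pos (le_max_right _ _)
  set ε : ℝ := x u / max lam 1 with hε
  have hεpos : 0 < ε := div_pos hu hL
  have hLε : (max lam 1) * ε = x u := by
    rw [hε, mul_div_cancel₀]
    exact ne_of_gt hL
  set e : Fin n → ℝ := Pi.single v 1 with he
  set y : Fin n → ℝ := x + ε • e with hy
  have hxx : x ⬝ᵥ x = 1 := by
    rw [dotProduct]
    rw [← hunit]
    exact Finset.sum_congr rfl fun i _ => (pow_two (x i)).symm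
  have hq1 : x ⬝ᵥ (Γ'.adjMatrix *ᵥ x) = lam := by
    rw [hx, dotProduct_smul, smul_eq_mul, hxx, mul_one]
  have hq2 : e ⬝ᵥ (Γ'.adjMatrix *ᵥ x) = lam * x v := by
    rw [hx, he, single_dotProduct, one_mul, Pi.smul_apply, smul_eq_mul]
  have hq3 : x ⬝ᵥ (Γ'.adjMatrix *ᵥ e) = lam * x v := by
    rw [dotProduct_mulVec, ← Matrix.mulVec_transpose, Γ'.adjMatrix_transpose, hx,
      he, smul_dotProduct, dotProduct_single, mul_one, smul_eq_mul]
  have hq4 : e ⬝ᵥ (Γ'.adjMatrix *ᵥ e) = 0 := by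
    simp [he, Matrix.mulVec_single, single_dotProduct, Γ'.adjMatrix_diag]
  have hee : e ⬝ᵥ e = 1 := by
    rw [he, single_dotProduct, one_mul, Pi.single_eq_same]
  have hxe : x ⬝ᵥ e = x v := by
    rw [he, dotProduct_single, mul_one]
  have hex : e ⬝ᵥ x = x v := by
    rw [he, single_dotProduct, one_mul]
  have hyu : y u = x u := by
    rw [hy, Pi.add_apply, Pi.smul_apply, he, Pi.single_eq_of_ne hne_uv, smul_zero, add_zero]
  have hyv : y v = x v + ε := by
    rw [hy, Pi.add_apply, Pi.smul_apply, he, Pi.single_eq_same, smul_eq_mul, mul_one]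
  have hquad' : y ⬝ᵥ (Γ'.adjMatrix *ᵥ y) = lam + 2 * ε * lam * x v := by
    rw [hy, Matrix.mulVec_add, Matrix.mulVec_smul, dotProduct_add,
      add_dotProduct, add_dotProduct, dotProduct_smul,
      smul_dotProduct, smul_dotProduct, dotProduct_smul,
      hq1, hq2, hq3, hq4]
    simp only [smul_eq_mul]
    ring
  have hquad : y ⬝ᵥ (Γ.adjMatrix *ᵥ y) = lam + 2 * ε * lam * x v + 2 * x u * (x v + ε) := by
    rw [hdecomp, Matrix.add_mulVec, Matrix.add_mulVec, dotProduct_add,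
      dotProduct_add, hquad', SignedGraph.quad_std, SignedGraph.quad_std, hyu, hyv]
    ring
  have hnorm : y ⬝ᵥ y = 1 + 2 * ε * x v + ε ^ 2 := by
    rw [hy, dotProduct_add, add_dotProduct, add_dotProduct,
      dotProduct_smul, smul_dotProduct, smul_dotProduct,
      dotProduct_smul, hxx, hxe, hex, hee]
    simp only [smul_eq_mul]
    ring
  -- contradiction via the Rayleigh quotient
  have hray : y ⬝ᵥ Γ.adjMatrix *ᵥ y ≤ Γ.lambda1 * (y ⬝ᵥ y) :=
    Γ.rayleigh_le_lambda1 y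
  have hyy : 0 < y ⬝ᵥ y := by
    rw [hnorm]
    have := hnn v
    nlinarith
  have hlt : lam * (y ⬝ᵥ y) < y ⬝ᵥ Γ.adjMatrix *ᵥ y := by
    rw [hquad, hnorm]
    have h1 : lam ≤ max lam 1 := le_max_left _ _
    have h2 := hnn v
    nlinarith [mul_pos hu hεpos, mul_pos hεpos hεpos]
  have hle1 : Γ.lambda1 ≤ lam := hmax Γ hΓub hΓfree
  have hle2 : Γ.lambda1 * (y ⬝ᵥ y) ≤ lam * (y ⬝ᵥ y) :=
    mul_le_mul_of_nonneg_right hle1 hyy.le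
  linarith
end
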